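/- For N×N Hermitian matrices X₁,…,X_ℓ, setting Z = X₁² + ⋯ + X_ℓ², for every nonnegative integer D and every nonnegative integer k one has Tr(Z^{k+D}) ≤ ℓ^D · Tr(Z^k · (X₁^{2D} + ⋯ + X_ℓ^{2D})). -/

import Mathlib

open Matrix
open scoped ComplexOrder

/-- Log-convex nonneg sequence with `c 0 = 1` satisfies `c 1 ^ D ≤ c D`. -/
lemma auxSeq (c : ℕ → ℝ) (h0 : c 0 = 1) (hnn : ∀ j, 0 ≤ c j)
    (hcs : ∀ j, c (j + 1) ^ 2 ≤ c j * c (j + 2)) : ∀ D, c 1 ^ D ≤ c D := by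
  by_cases h1 : c 1 = 0
  · intro D
    cases D with
    | zero => simp [h0]
    | succ n => simpa [h1] using hnn (n + 1)
  · have key : ∀ j, c (j + 1) = 0 → c 1 = 0 := by
      intro j
      induction j with
      | zero => exact id
      | succ n ih =>
        intro h
        apply ih
        nlinarith [hcs n, hnn n, hnn (n + 1), sq_nonneg (c (n + 1))]
    have hpos : ∀ j, 0 < c j := by
      intro j
      cases j with
      | zero => simp [h0]
      | succ n => exact lt_of_le_of_ne (hnn _) fun e => h1 (key n e.symm)
    have step : ∀ j, c 1 * c j ≤ c (j + 1) := by
      intro j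
      induction j with
      | zero => simp [h0]
      | succ n ih =>
        have h2 := hcs n
        have h3 := mul_le_mul_of_nonneg_right ih (le_of_lt (hpos (n + 1)))
        have h4 := hpos n
        nlinarith [hpos (n + 2), hpos 1]
    intro D
    induction D with
    | zero => simp [h0]
    | succ n ih =>
      calc c 1 ^ (n + 1) = c 1 * c 1 ^ n := by ring
        _ ≤ c 1 * c n := mul_le_mul_of_nonneg_left ih (hnn 1)
        _ ≤ c (n + 1) := step n

/-- Cauchy–Schwarz for complex dot products. -/
lemma auxCS {N : ℕ} (v w : Fin N → ℂ) :
    ‖star v ⬝ᵥ w‖ ^ 2 ≤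
      (∑ a, Complex.normSq (v a)) * (∑ a, Complex.normSq (w a)) := by
  let v' : EuclideanSpace ℂ (Fin N) := (WithLp.equiv 2 _).symm v
  let w' : EuclideanSpace ℂ (Fin N) := (WithLp.equiv 2 _).symm w
  have hnorm : ∀ x : Fin N → ℂ,
      ‖(WithLp.equiv 2 (Fin N → ℂ)).symm x‖ ^ 2 = ∑ a, Complex.normSq (x a) := by
    intro x
    rw [EuclideanSpace.norm_eq, Real.sq_sqrt (by positivity)]
    simp [Complex.sq_norm]
  have hinner : (inner ℂ v' w' : ℂ) = star v ⬝ᵥ w := by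
    simp [v', w', PiLp.inner_apply, dotProduct, RCLike.inner_apply, mul_comm]
  have h := norm_inner_le_norm (𝕜 := ℂ) v' w'
  have h2 : ‖(inner ℂ v' w' : ℂ)‖ ^ 2 ≤ (‖v'‖ * ‖w'‖) ^ 2 :=
    pow_le_pow_left₀ (norm_nonneg _) h 2
  calc ‖star v ⬝ᵥ w‖ ^ 2 = ‖(inner ℂ v' w' : ℂ)‖ ^ 2 := by
        rw [hinner]
    _ ≤ (‖v'‖ * ‖w'‖) ^ 2 := h2
    _ = (∑ a, Complex.normSq (v a)) * (∑ a, Complex.normSq (w a)) := by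
        rw [mul_pow, hnorm, hnorm]

lemma auxDotPow {N : ℕ} {X : Matrix (Fin N) (Fin N) ℂ} (hX : X.IsHermitian)
    (u : Fin N → ℂ) (a b : ℕ) :
    star (X ^ a *ᵥ u) ⬝ᵥ (X ^ b *ᵥ u) = star u ⬝ᵥ (X ^ (a + b) *ᵥ u) := by
  rw [star_mulVec, (hX.pow a).eq, ← dotProduct_mulVec, mulVec_mulVec, ← pow_add]

lemma auxDotSelf {N : ℕ} (w : Fin N → ℂ) :
    star w ⬝ᵥ w = ((∑ a, Complex.normSq (w a) : ℝ) : ℂ) := by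
  simp only [dotProduct, Pi.star_apply, Complex.ofReal_sum]
  congr 1
  ext a
  rw [Complex.normSq_eq_conj_mul_self]; rfl

lemma auxDiagEntry {N : ℕ} (U M : Matrix (Fin N) (Fin N) ℂ) (p : Fin N) :
    (star U * M * U) p p = star (fun a => U a p) ⬝ᵥ (M *ᵥ fun a => U a p) := by
  simp only [Matrix.mul_apply, Matrix.star_apply, dotProduct, Matrix.mulVec, Pi.star_apply,
    Finset.sum_mul, Finset.mul_sum]
  rw [Finset.sum_comm]
  exact Finset.sum_congr rfl fun a _ => Finset.sum_congr rfl fun b _ => by ring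

/-- For Hermitian X₁,…,X_ℓ and Z = ∑ᵢ Xᵢ², for all D, k ∈ ℕ,
Tr(Z^{k+D}) ≤ ℓ^D · Tr(Z^k (∑ᵢ Xᵢ^{2D})). -/
theorem stmt3 (N ℓ : ℕ) (hℓ : 0 < ℓ) (X : Fin ℓ → Matrix (Fin N) (Fin N) ℂ)
    (hX : ∀ i, (X i).IsHermitian) (D k : ℕ) :
    ((∑ i, (X i) ^ 2) ^ (k + D)).trace ≤
      (ℓ : ℂ) ^ D * ((∑ i, (X i) ^ 2) ^ k * ∑ i, (X i) ^ (2 * D)).trace := by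
  classical
  set Z : Matrix (Fin N) (Fin N) ℂ := ∑ i, X i ^ 2 with hZdef
  have hHi : ∀ i, ((X i) ^ 2).IsHermitian := fun i => (hX i).pow 2
  have hZherm : Z.IsHermitian := by
    unfold Matrix.IsHermitian
    rw [conjTranspose_sum]
    exact Finset.sum_congr rfl fun i _ => hHi i
  have hZpsd : Z.PosSemidef := by
    have h1 : ∀ i : Fin ℓ, ((X i) ^ 2).PosSemidef := by
      intro i
      have := posSemidef_conjTranspose_mul_self (X i)
      rwa [(hX i).eq, ← pow_two] at this
    exact Finset.sum_induction _ _ (fun a b ha hb => ha.add hb) (Matrix.PosSemidef.zero)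
      (fun i _ => h1 i)
  set U : Matrix (Fin N) (Fin N) ℂ := (hZherm.eigenvectorUnitary : Matrix (Fin N) (Fin N) ℂ)
    with hUdef
  set lam : Fin N → ℝ := hZherm.eigenvalues with hlamdef
  set E : Matrix (Fin N) (Fin N) ℂ := diagonal (RCLike.ofReal ∘ lam) with hEdef
  have hspec : Z = U * E * star U := hZherm.spectral_theorem
  have hUU : star U * U = 1 := Unitary.star_mul_self_of_mem (hZherm.eigenvectorUnitary).2
  have hUU' : U * star U = 1 := Unitary.mul_star_self_of_mem (hZherm.eigenvectorUnitary).2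
  -- powers of Z
  have hpow : ∀ m : ℕ, Z ^ m = U * E ^ m * star U := by
    intro m
    induction m with
    | zero => rw [pow_zero, pow_zero, mul_one, hUU']
    | succ n ih =>
      rw [pow_succ, ih, pow_succ]
      conv_lhs => rw [hspec]
      have h1 : U * E ^ n * star U * (U * E * star U) = U * (E ^ n * ((star U * U) * (E * star U))) := by
        simp only [mul_assoc]
      rw [h1, hUU, one_mul]
      simp only [mul_assoc]
  -- trace of powers
  have htr : ∀ m : ℕ, (Z ^ m).trace = ∑ p, ((lam p : ℂ)) ^ m := by
    intro m
    rw [hpow m, trace_mul_cycle, hUU, one_mul, hEdef, diagonal_pow, trace_diagonal]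
    simp
  -- trace against a matrix
  have htrmul : ∀ M : Matrix (Fin N) (Fin N) ℂ,
      (Z ^ k * M).trace = ∑ p, ((lam p : ℂ)) ^ k * (star U * M * U) p p := by
    intro M
    rw [hpow k]
    have h1 : U * E ^ k * star U * M = U * (E ^ k * (star U * M)) := by
      simp only [mul_assoc]
    rw [h1, trace_mul_comm]
    have h2 : E ^ k * (star U * M) * U = E ^ k * (star U * M * U) := by
      simp only [mul_assoc]
    rw [h2, hEdef, diagonal_pow, Matrix.trace]
    simp [Matrix.diagonal_mul]
  -- columns and the scalar sequences
  set u : Fin N → Fin N → ℂ := fun p a => U a p with hudef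
  set c : Fin ℓ → Fin N → ℕ → ℝ :=
    fun i p j => ∑ a, Complex.normSq (((X i) ^ j *ᵥ u p) a) with hcdef
  have hcnn : ∀ i p j, 0 ≤ c i p j :=
    fun i p j => Finset.sum_nonneg fun a _ => Complex.normSq_nonneg _
  have hentry : ∀ (M : Matrix (Fin N) (Fin N) ℂ) p,
      (star U * M * U) p p = star (u p) ⬝ᵥ (M *ᵥ u p) := fun M p => auxDiagEntry U M p
  have hc0 : ∀ i p, c i p 0 = 1 := by
    intro i p
    have h1 : (star U * U) p p = 1 := by rw [hUU, Matrix.one_apply_eq]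
    have h2 := hentry 1 p
    rw [Matrix.mul_one, Matrix.one_mulVec, auxDotSelf] at h2
    have h4 : ((∑ a, Complex.normSq (u p a) : ℝ) : ℂ) = 1 := h2.symm.trans h1
    have h5 : (∑ a, Complex.normSq (u p a) : ℝ) = 1 := by exact_mod_cast h4
    rw [hcdef]
    simpa using h5
  have hdiag : ∀ i p j, (star U * ((X i) ^ (2 * j)) * U) p p = ((c i p j : ℝ) : ℂ) := by
    intro i p j
    rw [hentry, two_mul, ← auxDotPow (hX i) (u p) j j, auxDotSelf]
  have hlam : ∀ p, lam p = ∑ i, c i p 1 := by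
    intro p
    have h1 : star U * Z * U = E := by
      conv_lhs => rw [hspec]
      have : star U * (U * E * star U) * U = (star U * U) * (E * (star U * U)) := by
        simp only [mul_assoc]
      rw [this, hUU, one_mul, mul_one]
    have h2 : (star U * Z * U) p p = ((lam p : ℝ) : ℂ) := by
      rw [h1, hEdef]
      simp
    have h3 : star U * Z * U = ∑ i, star U * ((X i) ^ 2) * U := by
      rw [hZdef, Finset.mul_sum, Finset.sum_mul]
    have h4 : (star U * Z * U) p p = ∑ i, ((c i p 1 : ℝ) : ℂ) := by
      rw [h3, Matrix.sum_apply]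
      exact Finset.sum_congr rfl fun i _ => by
        have := hdiag i p 1
        rwa [mul_one] at this
    rw [h2] at h4
    exact_mod_cast h4
  have hcs : ∀ i p j, c i p (j + 1) ^ 2 ≤ c i p j * c i p (j + 2) := by
    intro i p j
    have h1 := auxCS ((X i) ^ j *ᵥ u p) ((X i) ^ (j + 2) *ᵥ u p)
    have h2 : star ((X i) ^ j *ᵥ u p) ⬝ᵥ ((X i) ^ (j + 2) *ᵥ u p) = ((c i p (j + 1) : ℝ) : ℂ) := by
      rw [auxDotPow (hX i) (u p) j (j + 2),
        show j + (j + 2) = (j + 1) + (j + 1) by ring,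
        ← auxDotPow (hX i) (u p) (j + 1) (j + 1), auxDotSelf]
    rw [h2] at h1
    simpa [Complex.norm_real, sq_abs] using h1
  have hmono : ∀ i p Dn, c i p 1 ^ Dn ≤ c i p Dn :=
    fun i p => auxSeq (c i p) (hc0 i p) (hcnn i p) (hcs i p)
  have hlamnn : ∀ p, 0 ≤ lam p := fun p => hZpsd.eigenvalues_nonneg p
  -- the per-eigenvector inequality
  have hmain : ∀ p, lam p ^ D ≤ (ℓ : ℝ) ^ D * ∑ i, c i p D := by
    intro p
    cases D with
    | zero =>
      simp only [pow_zero, one_mul]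
      have : ∑ i, c i p 0 = (ℓ : ℝ) := by simp [hc0]
      rw [this]
      exact_mod_cast hℓ
    | succ n =>
      rw [hlam p]
      have hlpos : (0 : ℝ) < (ℓ : ℝ) ^ n := by positivity
      have h1 : (∑ i, c i p 1) ^ (n + 1) ≤ (ℓ : ℝ) ^ n * ∑ i, c i p 1 ^ (n + 1) := by
        have hpm := pow_sum_le_card_mul_sum_pow (s := Finset.univ)
          (f := fun i => c i p 1) (fun i _ => hcnn i p 1) n
        rwa [Finset.card_univ, Fintype.card_fin] at hpm
      have h2 : ∑ i, c i p 1 ^ (n + 1) ≤ ∑ i, c i p (n + 1) :=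
        Finset.sum_le_sum fun i _ => hmono i p (n + 1)
      have h3 : (0 : ℝ) ≤ ∑ i, c i p (n + 1) :=
        Finset.sum_nonneg fun i _ => hcnn i p (n + 1)
      have h4 : (ℓ : ℝ) ^ n ≤ (ℓ : ℝ) ^ (n + 1) := by
        apply pow_le_pow_right₀ (by exact_mod_cast hℓ)
        omega
      calc (∑ i, c i p 1) ^ (n + 1) ≤ (ℓ : ℝ) ^ n * ∑ i, c i p 1 ^ (n + 1) := h1
        _ ≤ (ℓ : ℝ) ^ n * ∑ i, c i p (n + 1) :=
            mul_le_mul_of_nonneg_left h2 (le_of_lt hlpos)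
        _ ≤ (ℓ : ℝ) ^ (n + 1) * ∑ i, c i p (n + 1) :=
            mul_le_mul_of_nonneg_right h4 h3
  -- the real inequality
  have hreal : ∑ p, lam p ^ (k + D) ≤ (ℓ : ℝ) ^ D * ∑ p, lam p ^ k * ∑ i, c i p D := by
    rw [Finset.mul_sum]
    apply Finset.sum_le_sum
    intro p _
    have h1 : lam p ^ (k + D) = lam p ^ k * lam p ^ D := by rw [pow_add]
    rw [h1]
    calc lam p ^ k * lam p ^ D ≤ lam p ^ k * ((ℓ : ℝ) ^ D * ∑ i, c i p D) :=
          mul_le_mul_of_nonneg_left (hmain p) (pow_nonneg (hlamnn p) k)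
      _ = (ℓ : ℝ) ^ D * (lam p ^ k * ∑ i, c i p D) := by ring
  -- back to ℂ
  have hL : (Z ^ (k + D)).trace = ((∑ p, lam p ^ (k + D) : ℝ) : ℂ) := by
    rw [htr]
    push_cast
    rfl
  have hR : (Z ^ k * ∑ i, (X i) ^ (2 * D)).trace
      = ((∑ p, lam p ^ k * ∑ i, c i p D : ℝ) : ℂ) := by
    rw [htrmul]
    have hqq : ∀ p, (star U * (∑ i, (X i) ^ (2 * D)) * U) p p = ((∑ i, c i p D : ℝ) : ℂ) := by
      intro p
      have hs : star U * (∑ i, (X i) ^ (2 * D)) * U = ∑ i, star U * ((X i) ^ (2 * D)) * U := by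
        rw [Finset.mul_sum, Finset.sum_mul]
      rw [hs, Matrix.sum_apply]
      push_cast
      exact Finset.sum_congr rfl fun i _ => hdiag i p D
    simp_rw [hqq]
    push_cast
    rfl
  rw [hL, hR, show ((ℓ : ℂ)) ^ D * ((∑ p, lam p ^ k * ∑ i, c i p D : ℝ) : ℂ)
      = (((ℓ : ℝ) ^ D * ∑ p, lam p ^ k * ∑ i, c i p D : ℝ) : ℂ) by push_cast; ring]
  exact_mod_cast hreal
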